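/- Let δ > 0 and let H be continuous on [-1,-1+δ]. Suppose U ∈ C¹((-1,-1+δ]) satisfies (1-x²)·U'(x) + 2x·U(x) + (1/2)·U(x)² = H(x) for all x ∈ (-1,-1+δ). Then H(-1) ≥ -2, the limit lim_{x→-1⁺} U(x) exists, and this limit equals either 2 - √(4+2H(-1)) or 2 + √(4+2H(-1)). -/

import Mathlib

open Set Filter Topology


private lemma mono_le_aux {f f' : ℝ → ℝ} {a e : ℝ} (hae : a ≤ e)
    (hc : ContinuousOn f (Icc a e))
    (hd : ∀ x ∈ Ioo a e, HasDerivWithinAt f (f' x) (Ioo a e) x)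
    (h0 : ∀ x ∈ Ioo a e, 0 ≤ f' x) : f a ≤ f e := by
  have hm := monotoneOn_of_hasDerivWithinAt_nonneg (convex_Icc a e) hc
    (by rw [interior_Icc]; exact hd) (by rw [interior_Icc]; exact h0)
  exact hm (left_mem_Icc.2 hae) (right_mem_Icc.2 hae) hae

set_option maxHeartbeats 2000000 in
theorem stmt6 (δ : ℝ) (hδ : 0 < δ) (H U U' : ℝ → ℝ)
    (hH : ContinuousOn H (Icc (-1 : ℝ) (-1 + δ)))
    (hU : ∀ x ∈ Ioc (-1 : ℝ) (-1 + δ),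
      HasDerivWithinAt U (U' x) (Ioc (-1 : ℝ) (-1 + δ)) x)
    (hU' : ContinuousOn U' (Ioc (-1 : ℝ) (-1 + δ)))
    (heq : ∀ x ∈ Ioo (-1 : ℝ) (-1 + δ),
      (1 - x ^ 2) * U' x + 2 * x * U x + (1 / 2) * (U x) ^ 2 = H x) :
    H (-1) ≥ -2 ∧
    ∃ τ : ℝ, Tendsto U (𝓝[>] (-1)) (𝓝 τ) ∧
      (τ = 2 - Real.sqrt (4 + 2 * H (-1)) ∨ τ = 2 + Real.sqrt (4 + 2 * H (-1))) := by
  -- basic interval setup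
  set b : ℝ := -1 + min (δ/2) (1/2) with hbdef
  have hb1 : (-1:ℝ) < b := by
    have : (0:ℝ) < min (δ/2) (1/2) := lt_min (by linarith) (by norm_num)
    simp [hbdef]; linarith
  have hb2 : b ≤ -1/2 := by
    have h := min_le_right (δ/2) (1/2:ℝ)
    rw [hbdef]; linarith
  have hb3 : b < -1 + δ := by
    have h := min_le_left (δ/2) (1/2:ℝ)
    rw [hbdef]; linarith
  have hJsub : Ioc (-1:ℝ) b ⊆ Ioc (-1) (-1+δ) := Ioc_subset_Ioc le_rfl hb3.le
  have hJsub' : Ioc (-1:ℝ) b ⊆ Ioo (-1) (-1+δ) := fun x hx => ⟨hx.1, lt_of_le_of_lt hx.2 hb3⟩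
  have hUc : ContinuousOn U (Ioc (-1) (-1+δ)) := fun x hx => (hU x hx).continuousWithinAt
  -- bound for H
  obtain ⟨K, hK⟩ : ∃ K, ∀ x ∈ Icc (-1:ℝ) (-1+δ), ‖H x‖ ≤ K :=
    IsCompact.exists_bound_of_continuousOn isCompact_Icc hH
  have hK' : ∀ x ∈ Icc (-1:ℝ) (-1+δ), |H x| ≤ K := hK
  have hK0 : 0 ≤ K := le_trans (abs_nonneg _) (hK' (-1) ⟨le_rfl, by linarith⟩)
  set M : ℝ := 4*K + 10 with hMdef
  have hM10 : (10:ℝ) ≤ M := by simp [hMdef]; linarith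
  have hM0 : (0:ℝ) < M := by linarith
  -- elementary facts on J
  have hfacts : ∀ x ∈ Ioc (-1:ℝ) b, 0 < 1 + x ∧ x ≤ -1/2 ∧ 0 < 1 - x^2 ∧ 1 - x^2 ≤ 2*(1+x) := by
    intro x hx
    have h1 : -1 < x := hx.1
    have h2 : x ≤ -1/2 := le_trans hx.2 hb2
    refine ⟨by linarith, h2, by nlinarith, by nlinarith⟩
  -- the key differential inequality where |U| ≥ M
  have key : ∀ x ∈ Ioc (-1:ℝ) b, M ≤ |U x| → U' x ≤ -(U x)^2/(8*(1+x)) := by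
    intro x hx hUx
    obtain ⟨h1, h2, h3, h4⟩ := hfacts x hx
    have hxI : x ∈ Icc (-1:ℝ) (-1+δ) := ⟨hx.1.le, by linarith [hx.2]⟩
    have hHx : |H x| ≤ K := hK' x hxI
    have heqx := heq x (hJsub' hx)
    have hN : (1 - x^2) * U' x ≤ -(U x)^2*(1-x)/8 := by
      rcases le_abs.mp hUx with hpos | hneg
      · -- U x ≥ M
        have hHx' : H x ≤ K := (abs_le.mp hHx).2
        nlinarith [sq_nonneg (U x - 4), sq_nonneg (U x)]
      · -- U x ≤ -M
        have hneg' : U x ≤ -M := by linarith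
        have hHx' : H x ≤ K := (abs_le.mp hHx).2
        nlinarith [sq_nonneg (U x + 4*K + 10), mul_nonneg (by linarith : (0:ℝ) ≤ -x) (by linarith : (0:ℝ) ≤ -(U x)), sq_nonneg (U x)]
    have hB : -(U x)^2*(1-x)/8 = (1 - x^2) * (-(U x)^2/(8*(1+x))) := by
      field_simp
      ring
    rw [hB] at hN
    exact le_of_mul_le_mul_left hN h3
  -- the comparison estimate on intervals where |U| ≥ M
  have cmp : ∀ a e, -1 < a → a ≤ e → e ≤ b → (∀ x ∈ Icc a e, M ≤ |U x|) →
      (U a)⁻¹ - Real.log (1+a)/8 ≤ (U e)⁻¹ - Real.log (1+e)/8 := by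
    intro a e ha hae heb habs
    have hsub : Icc a e ⊆ Ioc (-1:ℝ) b := fun x hx => ⟨lt_of_lt_of_le ha hx.1, le_trans hx.2 heb⟩
    have hUne : ∀ x ∈ Icc a e, U x ≠ 0 := by
      intro x hx h0
      have := habs x hx
      rw [h0, abs_zero] at this; linarith
    have hx1 : ∀ x ∈ Icc a e, 0 < 1 + x := fun x hx => (hfacts x (hsub hx)).1
    apply mono_le_aux (f' := fun x => -(U' x)/(U x)^2 - (1/(1+x))/8) hae
    · intro x hx
      have h1 := hx1 x hx
      have hcw : ContinuousWithinAt U (Icc a e) x :=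
        (hUc x (hJsub (hsub hx))).mono (fun y hy => hJsub (hsub hy))
      have hlog : ContinuousWithinAt (fun y => Real.log (1+y) / 8) (Icc a e) x := by
        apply ContinuousWithinAt.div_const
        exact ((Real.continuousAt_log (ne_of_gt h1)).comp
          ((continuous_const.add continuous_id).continuousAt)).continuousWithinAt
      exact (hcw.inv₀ (hUne x hx)).sub hlog
    · intro x hx
      have hxIcc : x ∈ Icc a e := Ioo_subset_Icc_self hx
      have h1 := hx1 x hxIcc
      have hdU : HasDerivWithinAt U (U' x) (Ioo a e) x :=
        (hU x (hJsub (hsub hxIcc))).mono (fun y hy => hJsub (hsub (Ioo_subset_Icc_self hy)))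
      have hinv : HasDerivWithinAt (fun y => (U y)⁻¹) (-(U' x)/(U x)^2) (Ioo a e) x :=
        hdU.inv (hUne x hxIcc)
      have hlog : HasDerivWithinAt (fun y => Real.log (1+y) / 8) ((1/(1+x))/8) (Ioo a e) x := by
        apply HasDerivWithinAt.div_const
        have h2 : HasDerivAt (fun y : ℝ => 1 + y) 1 x := by
          simpa using (hasDerivAt_id x).const_add (1:ℝ)
        simpa using (h2.log (by linarith)).hasDerivWithinAt
      exact hinv.sub hlog
    · intro x hx
      have hxIcc : x ∈ Icc a e := Ioo_subset_Icc_self hx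
      have h1 := hx1 x hxIcc
      have hk := key x (hsub hxIcc) (habs x hxIcc)
      have hU2 : 0 < (U x)^2 := by
        have := habs x hxIcc
        have : M ≤ |U x| := this
        nlinarith [abs_nonneg (U x), sq_abs (U x)]
      have h81 : 0 < 8*(1+x) := by linarith
      have h5 : (U x)^2 ≤ -(U' x) * (8*(1+x)) := by
        rw [neg_div] at hk
        have h6 : (U x)^2/(8*(1+x)) ≤ -(U' x) := by linarith
        calc (U x)^2 = (U x)^2/(8*(1+x)) * (8*(1+x)) := by field_simp
        _ ≤ -(U' x) * (8*(1+x)) := mul_le_mul_of_nonneg_right h6 (by linarith)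
      have h7 : (1/(1+x))/8 ≤ -(U' x)/(U x)^2 := by
        have he : (1/(1+x))/8 = 1/((1+x)*8) := div_div 1 (1+x) 8
        rw [he, div_le_div_iff₀ (by linarith) hU2]
        nlinarith [h5]
      linarith
  -- U is bounded above by M on all of (-1, b]
  have hup : ∀ x ∈ Ioc (-1:ℝ) b, U x < M := by
    by_contra hcon
    push_neg at hcon
    obtain ⟨x₁, hx₁J, hx₁M⟩ := hcon
    -- trap region argument: U ≥ M on all of (-1, x₁]
    have trapA : ∀ x ∈ Ioc (-1:ℝ) x₁, M ≤ U x := by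
      by_contra hc2
      push_neg at hc2
      obtain ⟨x₂, hx₂, hx₂M⟩ := hc2
      have hx21 : x₂ < x₁ := lt_of_le_of_ne hx₂.2 (by rintro rfl; linarith)
      set S := {x ∈ Icc x₂ x₁ | M ≤ U x} with hSdef
      have hsubJ : Icc x₂ x₁ ⊆ Ioc (-1:ℝ) b :=
        fun y hy => ⟨lt_of_lt_of_le hx₂.1 hy.1, le_trans hy.2 hx₁J.2⟩
      have hScl : IsClosed S := by
        have hcU : ContinuousOn U (Icc x₂ x₁) :=
          hUc.mono (fun y hy => hJsub (hsubJ hy))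
        have h := hcU.preimage_isClosed_of_isClosed isClosed_Icc (isClosed_Ici (a := M))
        exact h
      have hSsub : S ⊆ Icc x₂ x₁ := sep_subset _ _
      have hScpt : IsCompact S := isCompact_Icc.of_isClosed_subset hScl hSsub
      have hSne : S.Nonempty := ⟨x₁, ⟨⟨hx21.le, le_rfl⟩, hx₁M⟩⟩
      set c := sInf S with hcdef
      have hcS : c ∈ S := hScpt.sInf_mem hSne
      have hcx₂ : x₂ < c := by
        rcases lt_or_eq_of_le hcS.1.1 with h | h
        · exact h
        · exfalso; rw [← h] at hcS; linarith [hcS.2]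
      have hcJ : c ∈ Ioc (-1:ℝ) b := hsubJ hcS.1
      have hdc := key c hcJ (le_abs.mpr (Or.inl hcS.2))
      have h1c := (hfacts c hcJ).1
      have hUc2pos : (0:ℝ) < (U c)^2 := by nlinarith [hcS.2]
      have hnegc : U' c < 0 :=
        lt_of_le_of_lt hdc (div_neg_of_neg_of_pos (by linarith) (by linarith))
      have hev : ∀ᶠ y in 𝓝[Ioc (-1:ℝ) (-1+δ)] c, U' y < 0 :=
        (hU' c (hJsub hcJ)).eventually (eventually_lt_nhds hnegc)
      rw [eventually_nhdsWithin_iff, Metric.eventually_nhds_iff] at hev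
      obtain ⟨ε, hε0, hε⟩ := hev
      set a' := max x₂ (c - ε/2) with ha'def
      have ha'c : a' < c := max_lt hcx₂ (by linarith)
      have ha'x₂ : x₂ ≤ a' := le_max_left _ _
      have hanti : StrictAntiOn U (Icc a' c) := by
        apply strictAntiOn_of_hasDerivWithinAt_neg (f' := U') (convex_Icc _ _)
        · exact hUc.mono (fun y hy => hJsub (hsubJ ⟨le_trans ha'x₂ hy.1, le_trans hy.2 hcS.1.2⟩))
        · rw [interior_Icc]
          intro y hy
          exact (hU y (hJsub (hsubJ ⟨le_trans ha'x₂ hy.1.le, le_trans hy.2.le hcS.1.2⟩))).mono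
            (fun z hz => hJsub (hsubJ ⟨le_trans ha'x₂ hz.1.le, le_trans hz.2.le hcS.1.2⟩))
        · rw [interior_Icc]
          intro y hy
          apply hε
          · rw [Real.dist_eq, abs_lt]
            constructor
            · have : c - ε/2 ≤ a' := le_max_right _ _
              linarith [hy.1]
            · linarith [hy.2]
          · exact hJsub (hsubJ ⟨le_trans ha'x₂ hy.1.le, le_trans hy.2.le hcS.1.2⟩)
      have hlt : U c < U a' :=
        hanti (left_mem_Icc.2 ha'c.le) (right_mem_Icc.2 ha'c.le) ha'c
      have ha'S : a' ∉ S := by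
        intro h
        have := csInf_le hScpt.bddBelow h
        rw [← hcdef] at this
        linarith
      have ha'Icc : a' ∈ Icc x₂ x₁ := ⟨ha'x₂, le_trans ha'c.le hcS.1.2⟩
      have : ¬ M ≤ U a' := fun h => ha'S ⟨ha'Icc, h⟩
      have := hcS.2
      linarith [hlt]
    -- now comparison gives a contradiction
    set c₀ := (U x₁)⁻¹ - Real.log (1+x₁)/8 with hc₀def
    set t := -8*c₀ - 1 with htdef
    set a := -1 + min (1+x₁) (Real.exp t) with hadef
    have h1x₁ : 0 < 1 + x₁ := (hfacts x₁ hx₁J).1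
    have ha1 : (1:ℝ) + a = min (1+x₁) (Real.exp t) := by rw [hadef]; ring
    have ha1pos : 0 < 1 + a := by rw [ha1]; exact lt_min h1x₁ (Real.exp_pos t)
    have ha2 : a ≤ x₁ := by
      have := min_le_left (1+x₁) (Real.exp t)
      rw [hadef]; linarith
    have hamem : a ∈ Ioc (-1:ℝ) x₁ := ⟨by linarith, ha2⟩
    have halog : Real.log (1+a) ≤ t := by
      rw [ha1]
      calc Real.log (min (1+x₁) (Real.exp t)) ≤ Real.log (Real.exp t) :=
            Real.log_le_log (by rw [← ha1]; exact ha1pos) (min_le_right _ _)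
      _ = t := Real.log_exp t
    have habs : ∀ x ∈ Icc a x₁, M ≤ |U x| := fun x hx =>
      le_abs.mpr (Or.inl (trapA x ⟨lt_of_lt_of_le (by linarith) hx.1, hx.2⟩))
    have hcmp := cmp a x₁ (by linarith) ha2 hx₁J.2 habs
    have hUa : M ≤ U a := trapA a hamem
    have hUainv : 0 < (U a)⁻¹ := inv_pos.mpr (by linarith)
    rw [← hc₀def] at hcmp
    have h9 : (U a)⁻¹ ≤ c₀ + Real.log (1+a)/8 := by linarith
    have h10 : (U a)⁻¹ ≤ c₀ + t/8 := by linarith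
    have h11 : (U a)⁻¹ ≤ -1/8 := by rw [htdef] at h10; linarith
    linarith
  -- U is bounded below by -M on (-1, b₂]
  have hdn : ∃ b₂, (-1 < b₂ ∧ b₂ ≤ b) ∧ ∀ x ∈ Ioc (-1:ℝ) b₂, -M < U x := by
    set b₂ := -1 + (1+b) * Real.exp (-(16/M)) with hb₂def
    have h1b : (0:ℝ) < 1 + b := by linarith
    have hexppos : 0 < Real.exp (-(16/M)) := Real.exp_pos _
    have hb₂1 : (-1:ℝ) < b₂ := by
      have : 0 < (1+b) * Real.exp (-(16/M)) := mul_pos h1b hexppos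
      rw [hb₂def]; linarith
    have h1b₂ : (1:ℝ) + b₂ = (1+b) * Real.exp (-(16/M)) := by rw [hb₂def]; ring
    have hb₂2 : b₂ ≤ b := by
      have hle1 : Real.exp (-(16/M)) ≤ 1 := Real.exp_le_one_iff.mpr (by
        have : (0:ℝ) < 16/M := by positivity
        linarith)
      have : (1+b) * Real.exp (-(16/M)) ≤ (1+b) * 1 := mul_le_mul_of_nonneg_left hle1 h1b.le
      rw [hb₂def]; linarith
    refine ⟨b₂, ⟨hb₂1, hb₂2⟩, ?_⟩
    by_contra hcon
    push_neg at hcon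
    obtain ⟨x₁, hx₁J, hx₁M⟩ := hcon
    have hx₁M' : U x₁ ≤ -M := hx₁M
    have hx₁b : x₁ ≤ b := le_trans hx₁J.2 hb₂2
    -- trap region argument forward: U ≤ -M on [x₁, b]
    have trapB : ∀ x ∈ Icc x₁ b, U x ≤ -M := by
      by_contra hc2
      push_neg at hc2
      obtain ⟨x₂, hx₂, hx₂M⟩ := hc2
      have hx12 : x₁ < x₂ := by
        rcases lt_or_eq_of_le hx₂.1 with h | h
        · exact h
        · exfalso; rw [← h] at hx₂M; linarith
      set S := {x ∈ Icc x₁ x₂ | U x ≤ -M} with hSdef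
      have hsubJ : Icc x₁ x₂ ⊆ Ioc (-1:ℝ) b :=
        fun y hy => ⟨lt_of_lt_of_le hx₁J.1 hy.1, le_trans hy.2 hx₂.2⟩
      have hScl : IsClosed S := by
        have hcU : ContinuousOn U (Icc x₁ x₂) :=
          hUc.mono (fun y hy => hJsub (hsubJ hy))
        have h := hcU.preimage_isClosed_of_isClosed isClosed_Icc (isClosed_Iic (a := -M))
        exact h
      have hSsub : S ⊆ Icc x₁ x₂ := sep_subset _ _
      have hScpt : IsCompact S := isCompact_Icc.of_isClosed_subset hScl hSsub
      have hSne : S.Nonempty := ⟨x₁, ⟨⟨le_rfl, hx12.le⟩, hx₁M'⟩⟩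
      set c := sSup S with hcdef
      have hcS : c ∈ S := hScpt.sSup_mem hSne
      have hcx₂ : c < x₂ := by
        rcases lt_or_eq_of_le hcS.1.2 with h | h
        · exact h
        · exfalso; rw [h] at hcS; linarith [hcS.2]
      have hcJ : c ∈ Ioc (-1:ℝ) b := hsubJ hcS.1
      have hdc := key c hcJ (le_abs.mpr (Or.inr (by linarith [hcS.2])))
      have h1c := (hfacts c hcJ).1
      have hUc2pos : (0:ℝ) < (U c)^2 := by nlinarith [hcS.2]
      have hnegc : U' c < 0 :=
        lt_of_le_of_lt hdc (div_neg_of_neg_of_pos (by linarith) (by linarith))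
      have hev : ∀ᶠ y in 𝓝[Ioc (-1:ℝ) (-1+δ)] c, U' y < 0 :=
        (hU' c (hJsub hcJ)).eventually (eventually_lt_nhds hnegc)
      rw [eventually_nhdsWithin_iff, Metric.eventually_nhds_iff] at hev
      obtain ⟨ε, hε0, hε⟩ := hev
      set e' := min x₂ (c + ε/2) with he'def
      have hce' : c < e' := lt_min hcx₂ (by linarith)
      have he'x₂ : e' ≤ x₂ := min_le_left _ _
      have hsubJ2 : Icc c e' ⊆ Ioc (-1:ℝ) b :=
        fun y hy => hsubJ ⟨le_trans hcS.1.1 hy.1, le_trans hy.2 he'x₂⟩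
      have hanti : StrictAntiOn U (Icc c e') := by
        apply strictAntiOn_of_hasDerivWithinAt_neg (f' := U') (convex_Icc _ _)
        · exact hUc.mono (fun y hy => hJsub (hsubJ2 hy))
        · rw [interior_Icc]
          intro y hy
          exact (hU y (hJsub (hsubJ2 (Ioo_subset_Icc_self hy)))).mono
            (fun z hz => hJsub (hsubJ2 (Ioo_subset_Icc_self hz)))
        · rw [interior_Icc]
          intro y hy
          apply hε
          · rw [Real.dist_eq, abs_lt]
            have : e' ≤ c + ε/2 := min_le_right _ _
            constructor
            · linarith [hy.1]
            · linarith [hy.2]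
          · exact hJsub (hsubJ2 (Ioo_subset_Icc_self hy))
      have hlt : U e' < U c :=
        hanti (left_mem_Icc.2 hce'.le) (right_mem_Icc.2 hce'.le) hce'
      have he'S : e' ∉ S := by
        intro h
        have := le_csSup hScpt.bddAbove h
        rw [← hcdef] at this
        linarith
      have he'Icc : e' ∈ Icc x₁ x₂ := ⟨le_trans hcS.1.1 hce'.le, he'x₂⟩
      have : ¬ U e' ≤ -M := fun h => he'S ⟨he'Icc, h⟩
      have := hcS.2
      linarith
    -- comparison from x₁ to b gives a contradiction
    have habs : ∀ x ∈ Icc x₁ b, M ≤ |U x| := fun x hx =>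
      le_abs.mpr (Or.inr (by linarith [trapB x hx]))
    have hcmp := cmp x₁ b hx₁J.1 hx₁b le_rfl habs
    have hUx₁neg : U x₁ ≤ -M := hx₁M'
    have hUbneg : U b ≤ -M := trapB b ⟨hx₁b, le_rfl⟩
    have hinvx₁ : -M⁻¹ ≤ (U x₁)⁻¹ := by
      have h1 : (0:ℝ) < -U x₁ := by linarith
      have h2 : (-(U x₁))⁻¹ ≤ M⁻¹ := by
        apply inv_anti₀ hM0
        linarith
      rw [inv_neg] at h2
      linarith
    have hinvb : (U b)⁻¹ < 0 := inv_neg''.mpr (by linarith)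
    have hlogx₁ : Real.log (1+x₁) ≤ Real.log (1+b) - 16/M := by
      have h1x₁ : (0:ℝ) < 1 + x₁ := by linarith [hx₁J.1]
      have hle : (1:ℝ) + x₁ ≤ 1 + b₂ := by linarith [hx₁J.2]
      calc Real.log (1+x₁) ≤ Real.log (1+b₂) := Real.log_le_log h1x₁ hle
      _ = Real.log (1+b) + -(16/M) := by
          rw [h1b₂, Real.log_mul (by linarith) (by positivity), Real.log_exp]
      _ = Real.log (1+b) - 16/M := by ring
    have hMinv : (0:ℝ) < M⁻¹ := inv_pos.mpr hM0
    rw [div_eq_mul_inv (16:ℝ) M] at hlogx₁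
    have h9 : -M⁻¹ - Real.log (1+x₁)/8 ≤ - Real.log (1+b)/8 := by linarith
    linarith
  obtain ⟨b₂, ⟨hb₂1, hb₂2⟩, hdn⟩ := hdn
  -- eventual bounds on U near -1
  have hmemJ : Ioc (-1:ℝ) b₂ ∈ 𝓝[>] (-1:ℝ) := Ioc_mem_nhdsGT hb₂1
  have hevb : ∀ᶠ x in 𝓝[>] (-1:ℝ), -M < U x ∧ U x < M :=
    eventually_of_mem hmemJ (fun x hx => ⟨hdn x hx, hup x ⟨hx.1, le_trans hx.2 hb₂2⟩⟩)
  have hbddA : IsBoundedUnder (· ≤ ·) (𝓝[>] (-1:ℝ)) U :=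
    ⟨M, eventually_map.2 (hevb.mono fun x hx => hx.2.le)⟩
  have hbddB : IsBoundedUnder (· ≥ ·) (𝓝[>] (-1:ℝ)) U :=
    ⟨-M, eventually_map.2 (hevb.mono fun x hx => hx.1.le)⟩
  have hcobA : IsCoboundedUnder (· ≤ ·) (𝓝[>] (-1:ℝ)) U := hbddB.isCoboundedUnder_le
  have hcobB : IsCoboundedUnder (· ≥ ·) (𝓝[>] (-1:ℝ)) U := hbddA.isCoboundedUnder_ge
  set L₁ := liminf U (𝓝[>] (-1:ℝ)) with hL₁def
  set L₂ := limsup U (𝓝[>] (-1:ℝ)) with hL₂def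
  clear_value L₁ L₂
  have hL12 : L₁ ≤ L₂ := by rw [hL₁def, hL₂def]; exact liminf_le_limsup hbddA hbddB
  -- the band estimate: near x = -1 and u near c, the numerator is close to G₀ c
  have band : ∀ c ε : ℝ, 0 < ε → ∃ r, 0 < r ∧ ∃ e, -1 < e ∧ e ≤ b ∧
      ∀ x ∈ Ioc (-1:ℝ) e, ∀ u : ℝ, |u - c| ≤ r →
      |(H x - 2*x*u - u^2/2) - (H (-1) + 2*c - c^2/2)| ≤ ε := by
    intro c ε hε
    set Q := |c| + 2 with hQdef
    have hQ2 : (2:ℝ) ≤ Q := by have := abs_nonneg c; rw [hQdef]; linarith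
    have hQ0 : (0:ℝ) < Q := by linarith
    have hHc : ContinuousWithinAt H (Icc (-1:ℝ) (-1+δ)) (-1) := hH (-1) ⟨le_rfl, by linarith⟩
    have hev : ∀ᶠ y in 𝓝[Icc (-1:ℝ) (-1+δ)] (-1:ℝ), dist (H y) (H (-1)) < ε/2 :=
      hHc (Metric.ball_mem_nhds _ (by positivity))
    rw [eventually_nhdsWithin_iff, Metric.eventually_nhds_iff] at hev
    obtain ⟨ρ, hρ0, hρ⟩ := hev
    refine ⟨min 1 (ε/(16*Q)), lt_min one_pos (by positivity),
      -1 + min (1+b) (min (ρ/2) (ε/(16*Q))), ?_, ?_, ?_⟩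
    · have : (0:ℝ) < min (1+b) (min (ρ/2) (ε/(16*Q))) :=
        lt_min (by linarith) (lt_min (by linarith) (by positivity))
      linarith
    · have := min_le_left (1+b) (min (ρ/2) (ε/(16*Q)))
      linarith
    · intro x hx u hu
      set r := min 1 (ε/(16*Q)) with hrdef
      have hr1 : r ≤ 1 := min_le_left _ _
      have hr2 : r ≤ ε/(16*Q) := min_le_right _ _
      have hx0 : (-1:ℝ) < x := hx.1
      have hx1 : x + 1 ≤ min (1+b) (min (ρ/2) (ε/(16*Q))) := by linarith [hx.2]
      have hxρ : x + 1 ≤ ρ/2 := le_trans hx1 (le_trans (min_le_right _ _) (min_le_left _ _))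
      have hxQ : x + 1 ≤ ε/(16*Q) := le_trans hx1 (le_trans (min_le_right _ _) (min_le_right _ _))
      have hxb : x ≤ b := by have := le_trans hx1 (min_le_left _ _); linarith
      have hxI : x ∈ Icc (-1:ℝ) (-1+δ) := ⟨hx0.le, by linarith⟩
      have hH2 : |H x - H (-1)| ≤ ε/2 := by
        have := hρ (y := x) (by rw [Real.dist_eq]; rw [abs_lt]; constructor <;> linarith) hxI
        rw [Real.dist_eq] at this
        linarith [this]
      -- bounds on u
      have huc : |u| ≤ Q - 1 := by
        have h := abs_sub_abs_le_abs_sub u c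
        have : |u| - |c| ≤ r := le_trans h hu
        rw [hQdef]; linarith
      have hsplit : (H x - 2*x*u - u^2/2) - (H (-1) + 2*c - c^2/2)
          = (H x - H (-1)) + (-(2*((x+1)*u - (u - c)))) + (-((u-c)*(u+c)/2)) := by ring
      rw [hsplit]
      have hQe : ε/(16*Q)*Q = ε/16 := by field_simp
      have hB : |(-(2*((x+1)*u - (u - c))))| ≤ ε/4 := by
        rw [abs_neg]
        have h1 : |(x+1)*u - (u - c)| ≤ |(x+1)*u| + |u - c| := abs_sub _ _
        have h2 : |(x+1)*u| = (x+1)*|u| := by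
          rw [abs_mul, abs_of_nonneg (by linarith : (0:ℝ) ≤ x+1)]
        have h3 : (x+1)*|u| ≤ (ε/(16*Q))*Q :=
          mul_le_mul hxQ (by linarith) (abs_nonneg u) (by positivity)
        have h4 : r ≤ ε/16 := by
          have : ε/(16*Q) ≤ ε/16 := by
            apply div_le_div_of_nonneg_left hε.le (by norm_num)
            nlinarith
          linarith
        have h5 : |2*((x+1)*u - (u - c))| = 2*|(x+1)*u - (u - c)| := by
          rw [abs_mul]; norm_num
        rw [h5]
        rw [hQe] at h3
        rw [h2] at h1
        linarith [hu]
      have hC : |(-((u-c)*(u+c)/2))| ≤ ε/16 := by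
        rw [abs_neg, abs_div, abs_mul]
        have h1 : |u + c| ≤ 2*Q := by
          have := abs_add_le u c
          have h2 : |c| ≤ Q := by rw [hQdef]; linarith
          linarith [huc]
        have h2 : |u - c| * |u + c| ≤ (ε/(16*Q)) * (2*Q) :=
          mul_le_mul (le_trans hu hr2) h1 (abs_nonneg _) (by positivity)
        have h3 : (ε/(16*Q)) * (2*Q) = ε/8 := by field_simp; ring
        rw [h3] at h2
        have : |(2:ℝ)| = 2 := by norm_num
        rw [this]
        linarith
      calc |(H x - H (-1)) + (-(2*((x+1)*u - (u - c)))) + (-((u-c)*(u+c)/2))|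
          ≤ |(H x - H (-1)) + (-(2*((x+1)*u - (u - c))))| + |(-((u-c)*(u+c)/2))| := abs_add_le _ _
        _ ≤ |H x - H (-1)| + |(-(2*((x+1)*u - (u - c))))| + |(-((u-c)*(u+c)/2))| := by
            linarith [abs_add_le (H x - H (-1)) (-(2*((x+1)*u - (u - c))))]
        _ ≤ ε := by linarith
  -- sign of U' in a band where |U x - c| ≤ r, provided the limit quadratic is nonzero
  have hder : ∀ c r e, e ≤ b → (∀ x ∈ Ioc (-1:ℝ) e, ∀ u : ℝ, |u - c| ≤ r →
        |(H x - 2*x*u - u^2/2) - (H (-1) + 2*c - c^2/2)| ≤ |H (-1) + 2*c - c^2/2|/2) →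
      ∀ x ∈ Ioc (-1:ℝ) e, |U x - c| ≤ r →
      (0 < H (-1) + 2*c - c^2/2 → 0 < U' x) ∧ (H (-1) + 2*c - c^2/2 < 0 → U' x < 0) := by
    intro c r e heb hband x hx hUx
    have hxb : x ∈ Ioc (-1:ℝ) b := ⟨hx.1, le_trans hx.2 heb⟩
    obtain ⟨h1, h2, h3, h4⟩ := hfacts x hxb
    have heqx := heq x (hJsub' hxb)
    have hbx := hband x hx (U x) hUx
    have hNeq : (1 - x^2) * U' x = H x - 2*x*(U x) - (U x)^2/2 := by linarith
    constructor
    · intro hG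
      rw [abs_of_pos hG] at hbx
      have hN : 0 < H x - 2*x*(U x) - (U x)^2/2 := by
        have := (abs_le.mp hbx).1
        linarith
      rw [← hNeq] at hN
      by_contra hcon
      push_neg at hcon
      nlinarith
    · intro hG
      rw [abs_of_neg hG] at hbx
      have hN : H x - 2*x*(U x) - (U x)^2/2 < 0 := by
        have := (abs_le.mp hbx).2
        linarith
      rw [← hNeq] at hN
      by_contra hcon
      push_neg at hcon
      nlinarith
  -- liminf equals limsup
  have hLeq : L₁ = L₂ := by
    by_contra hne
    have hlt : L₁ < L₂ := lt_of_le_of_ne hL12 hne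
    -- a point strictly between where the limit quadratic is nonzero
    obtain ⟨c, hc1, hc2, hcG⟩ : ∃ c, L₁ < c ∧ c < L₂ ∧ H (-1) + 2*c - c^2/2 ≠ 0 := by
      by_contra hall
      push_neg at hall
      have hd : (0:ℝ) < L₂ - L₁ := by linarith
      have e1 := hall (L₁ + (L₂-L₁)/4) (by linarith) (by linarith)
      have e2 := hall (L₁ + (L₂-L₁)/2) (by linarith) (by linarith)
      have e3 := hall (L₁ + 3*(L₂-L₁)/4) (by linarith) (by linarith)
      nlinarith [e1, e2, e3, mul_pos hd hd]
    set G := H (-1) + 2*c - c^2/2 with hGdef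
    have hε : 0 < |G|/2 := by
      have := abs_pos.mpr hcG
      linarith
    obtain ⟨r, hr0, e, he1, he2, hband⟩ := band c (|G|/2) hε
    set r' := min r (min ((c-L₁)/2) ((L₂-c)/2)) with hr'def
    have hr'0 : 0 < r' := lt_min hr0 (lt_min (by linarith) (by linarith))
    have hr'r : r' ≤ r := min_le_left _ _
    have hr'1 : r' ≤ (c-L₁)/2 := le_trans (min_le_right _ _) (min_le_left _ _)
    have hr'2 : r' ≤ (L₂-c)/2 := le_trans (min_le_right _ _) (min_le_right _ _)
    have hcl : L₁ < c - r' := by linarith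
    have hcu : c + r' < L₂ := by linarith
    have hfr1 : ∃ᶠ x in 𝓝[>] (-1:ℝ), U x < c - r' :=
      frequently_lt_of_liminf_lt hcobB (by rw [← hL₁def]; exact hcl)
    have hfr2 : ∃ᶠ x in 𝓝[>] (-1:ℝ), c + r' < U x :=
      frequently_lt_of_lt_limsup hcobA (by rw [← hL₂def]; exact hcu)
    have hder' : ∀ x ∈ Ioc (-1:ℝ) e, |U x - c| ≤ r' →
        (0 < G → 0 < U' x) ∧ (G < 0 → U' x < 0) := by
      intro x hx hUx
      exact hder c r e he2 hband x hx (le_trans hUx hr'r)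
    -- find a monotone band crossing, in both sign cases, contradiction
    rcases hcG.lt_or_gt with hGneg | hGpos
    · -- G < 0 : U' < 0 in the band; find y < z with U y < c - r' < c + r' < U z
      obtain ⟨z, hzU, hz⟩ :=
        (hfr2.and_eventually (eventually_of_mem (Ioo_mem_nhdsGT he1) (fun _ h => h))).exists
      obtain ⟨y, hyU, hy⟩ :=
        (hfr1.and_eventually (eventually_of_mem (Ioo_mem_nhdsGT hz.1) (fun _ h => h))).exists
      have hyz : y < z := hy.2
      have hsubIoc : Icc y z ⊆ Ioc (-1:ℝ) e :=
        fun w hw => ⟨lt_of_lt_of_le hy.1 hw.1, le_trans hw.2 hz.2.le⟩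
      have hcUIcc : ContinuousOn U (Icc y z) :=
        hUc.mono (fun w hw => hJsub ⟨(hsubIoc hw).1, le_trans (hsubIoc hw).2 he2⟩)
      set S₁ := {x ∈ Icc y z | c + r' ≤ U x} with hS₁def
      have hS₁cl : IsClosed S₁ := by
        have h := hcUIcc.preimage_isClosed_of_isClosed isClosed_Icc (isClosed_Ici (a := c + r'))
        exact h
      have hS₁cpt : IsCompact S₁ := isCompact_Icc.of_isClosed_subset hS₁cl (sep_subset _ _)
      have hS₁ne : S₁.Nonempty := ⟨z, ⟨⟨hyz.le, le_rfl⟩, hzU.le⟩⟩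
      set p := sInf S₁ with hpdef
      have hpS : p ∈ S₁ := hS₁cpt.sInf_mem hS₁ne
      have hyp : y < p := by
        rcases lt_or_eq_of_le hpS.1.1 with h | h
        · exact h
        · exfalso; rw [← h] at hpS; linarith [hpS.2]
      set S₂ := {x ∈ Icc y p | U x ≤ c - r'} with hS₂def
      have hsub2 : Icc y p ⊆ Icc y z := Icc_subset_Icc le_rfl hpS.1.2
      have hS₂cl : IsClosed S₂ := by
        have h := (hcUIcc.mono hsub2).preimage_isClosed_of_isClosed isClosed_Icc
          (isClosed_Iic (a := c - r'))
        exact h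
      have hS₂cpt : IsCompact S₂ := isCompact_Icc.of_isClosed_subset hS₂cl (sep_subset _ _)
      have hS₂ne : S₂.Nonempty := ⟨y, ⟨⟨le_rfl, hyp.le⟩, hyU.le⟩⟩
      set q := sSup S₂ with hqdef
      have hqS : q ∈ S₂ := hS₂cpt.sSup_mem hS₂ne
      have hqp : q < p := by
        rcases lt_or_eq_of_le hqS.1.2 with h | h
        · exact h
        · exfalso; rw [h] at hqS; linarith [hqS.2, hpS.2]
      -- in the open band, U' < 0
      have hbandmem : ∀ x ∈ Ioo q p, |U x - c| ≤ r' := by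
        intro x hx
        have hx1 : c - r' < U x := by
          by_contra hcon
          push_neg at hcon
          have : x ∈ S₂ := ⟨⟨le_trans hqS.1.1 hx.1.le, hx.2.le⟩, hcon⟩
          have := le_csSup hS₂cpt.bddAbove this
          rw [← hqdef] at this
          linarith [hx.1]
        have hx2 : U x < c + r' := by
          by_contra hcon
          push_neg at hcon
          have : x ∈ S₁ := ⟨⟨le_trans hqS.1.1 hx.1.le, le_trans hx.2.le hpS.1.2⟩, hcon⟩
          have := csInf_le hS₁cpt.bddBelow this
          rw [← hpdef] at this
          linarith [hx.2]
        rw [abs_le]; constructor <;> linarith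
      have hmemIoc : ∀ x ∈ Icc q p, x ∈ Ioc (-1:ℝ) e :=
        fun x hx => hsubIoc ⟨le_trans hqS.1.1 hx.1, le_trans hx.2 hpS.1.2⟩
      have hanti : AntitoneOn U (Icc q p) := by
        apply antitoneOn_of_hasDerivWithinAt_nonpos (f' := U') (convex_Icc _ _)
        · exact hUc.mono (fun w hw => hJsub ⟨(hmemIoc w hw).1, le_trans (hmemIoc w hw).2 he2⟩)
        · rw [interior_Icc]
          intro w hw
          exact (hU w (hJsub ⟨(hmemIoc w (Ioo_subset_Icc_self hw)).1,
              le_trans (hmemIoc w (Ioo_subset_Icc_self hw)).2 he2⟩)).mono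
            (fun v hv => hJsub ⟨(hmemIoc v (Ioo_subset_Icc_self hv)).1,
              le_trans (hmemIoc v (Ioo_subset_Icc_self hv)).2 he2⟩)
        · rw [interior_Icc]
          intro w hw
          exact ((hder' w (hmemIoc w (Ioo_subset_Icc_self hw)) (hbandmem w hw)).2 hGneg).le
      have := hanti (left_mem_Icc.2 hqp.le) (right_mem_Icc.2 hqp.le) hqp.le
      -- U q ≤ c - r' and c + r' ≤ U p, but U p ≤ U q
      linarith [hqS.2, hpS.2, hr'0]
    · -- G > 0 : U' > 0 in the band; find y < z with U y > c + r' > c - r' > U z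
      obtain ⟨z, hzU, hz⟩ :=
        (hfr1.and_eventually (eventually_of_mem (Ioo_mem_nhdsGT he1) (fun _ h => h))).exists
      obtain ⟨y, hyU, hy⟩ :=
        (hfr2.and_eventually (eventually_of_mem (Ioo_mem_nhdsGT hz.1) (fun _ h => h))).exists
      have hyz : y < z := hy.2
      have hsubIoc : Icc y z ⊆ Ioc (-1:ℝ) e :=
        fun w hw => ⟨lt_of_lt_of_le hy.1 hw.1, le_trans hw.2 hz.2.le⟩
      have hcUIcc : ContinuousOn U (Icc y z) :=
        hUc.mono (fun w hw => hJsub ⟨(hsubIoc hw).1, le_trans (hsubIoc hw).2 he2⟩)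
      set S₁ := {x ∈ Icc y z | U x ≤ c - r'} with hS₁def
      have hS₁cl : IsClosed S₁ := by
        have h := hcUIcc.preimage_isClosed_of_isClosed isClosed_Icc (isClosed_Iic (a := c - r'))
        exact h
      have hS₁cpt : IsCompact S₁ := isCompact_Icc.of_isClosed_subset hS₁cl (sep_subset _ _)
      have hS₁ne : S₁.Nonempty := ⟨z, ⟨⟨hyz.le, le_rfl⟩, hzU.le⟩⟩
      set p := sInf S₁ with hpdef
      have hpS : p ∈ S₁ := hS₁cpt.sInf_mem hS₁ne
      have hyp : y < p := by
        rcases lt_or_eq_of_le hpS.1.1 with h | h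
        · exact h
        · exfalso; rw [← h] at hpS; linarith [hpS.2]
      set S₂ := {x ∈ Icc y p | c + r' ≤ U x} with hS₂def
      have hsub2 : Icc y p ⊆ Icc y z := Icc_subset_Icc le_rfl hpS.1.2
      have hS₂cl : IsClosed S₂ := by
        have h := (hcUIcc.mono hsub2).preimage_isClosed_of_isClosed isClosed_Icc
          (isClosed_Ici (a := c + r'))
        exact h
      have hS₂cpt : IsCompact S₂ := isCompact_Icc.of_isClosed_subset hS₂cl (sep_subset _ _)
      have hS₂ne : S₂.Nonempty := ⟨y, ⟨⟨le_rfl, hyp.le⟩, hyU.le⟩⟩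
      set q := sSup S₂ with hqdef
      have hqS : q ∈ S₂ := hS₂cpt.sSup_mem hS₂ne
      have hqp : q < p := by
        rcases lt_or_eq_of_le hqS.1.2 with h | h
        · exact h
        · exfalso; rw [h] at hqS; linarith [hqS.2, hpS.2]
      have hbandmem : ∀ x ∈ Ioo q p, |U x - c| ≤ r' := by
        intro x hx
        have hx1 : c - r' < U x := by
          by_contra hcon
          push_neg at hcon
          have : x ∈ S₁ := ⟨⟨le_trans hqS.1.1 hx.1.le, le_trans hx.2.le hpS.1.2⟩, hcon⟩
          have := csInf_le hS₁cpt.bddBelow this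
          rw [← hpdef] at this
          linarith [hx.2]
        have hx2 : U x < c + r' := by
          by_contra hcon
          push_neg at hcon
          have : x ∈ S₂ := ⟨⟨le_trans hqS.1.1 hx.1.le, hx.2.le⟩, hcon⟩
          have := le_csSup hS₂cpt.bddAbove this
          rw [← hqdef] at this
          linarith [hx.1]
        rw [abs_le]; constructor <;> linarith
      have hmemIoc : ∀ x ∈ Icc q p, x ∈ Ioc (-1:ℝ) e :=
        fun x hx => hsubIoc ⟨le_trans hqS.1.1 hx.1, le_trans hx.2 hpS.1.2⟩
      have hmono : MonotoneOn U (Icc q p) := by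
        apply monotoneOn_of_hasDerivWithinAt_nonneg (f' := U') (convex_Icc _ _)
        · exact hUc.mono (fun w hw => hJsub ⟨(hmemIoc w hw).1, le_trans (hmemIoc w hw).2 he2⟩)
        · rw [interior_Icc]
          intro w hw
          exact (hU w (hJsub ⟨(hmemIoc w (Ioo_subset_Icc_self hw)).1,
              le_trans (hmemIoc w (Ioo_subset_Icc_self hw)).2 he2⟩)).mono
            (fun v hv => hJsub ⟨(hmemIoc v (Ioo_subset_Icc_self hv)).1,
              le_trans (hmemIoc v (Ioo_subset_Icc_self hv)).2 he2⟩)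
        · rw [interior_Icc]
          intro w hw
          exact ((hder' w (hmemIoc w (Ioo_subset_Icc_self hw)) (hbandmem w hw)).1 hGpos).le
      have := hmono (left_mem_Icc.2 hqp.le) (right_mem_Icc.2 hqp.le) hqp.le
      linarith [hqS.2, hpS.2, hr'0]
  -- the limit exists
  have htend : Tendsto U (𝓝[>] (-1:ℝ)) (𝓝 L₁) :=
    tendsto_of_liminf_eq_limsup hL₁def.symm (hL₂def.symm.trans hLeq.symm) hbddA hbddB
  -- the limit satisfies the quadratic equation
  have hG0 : H (-1) + 2*L₁ - L₁^2/2 = 0 := by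
    by_contra hne
    obtain ⟨G, hGdef⟩ : ∃ G : ℝ, G = H (-1) + 2*L₁ - L₁^2/2 := ⟨_, rfl⟩
    rw [← hGdef] at hne
    have hε : 0 < |G|/2 := by
      have := abs_pos.mpr hne
      linarith
    obtain ⟨r, hr0, e, he1, he2, hband⟩ := band L₁ (|G|/2) hε
    rw [← hGdef] at hband
    have hUev : ∀ᶠ x in 𝓝[>] (-1:ℝ), |U x - L₁| ≤ r := by
      have := Metric.tendsto_nhds.mp htend r hr0
      filter_upwards [this] with x hx
      rw [Real.dist_eq] at hx
      exact hx.le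
    have hev2 : ∀ᶠ x in 𝓝[>] (-1:ℝ), |U x - L₁| ≤ r ∧ x ∈ Ioc (-1:ℝ) (min e b₂) := by
      filter_upwards [hUev, Ioc_mem_nhdsGT (lt_min he1 hb₂1)] with x h1 h2
      exact ⟨h1, h2⟩
    obtain ⟨x₀, hx₀, hx₀sub⟩ := (nhdsGT_basis (-1:ℝ)).eventually_iff.mp hev2
    set m := -1 + (x₀+1)/2 with hmdef
    have hm1 : (-1:ℝ) < m := by rw [hmdef]; linarith
    have hm2 : m < x₀ := by rw [hmdef]; linarith
    have hmprop := hx₀sub ⟨hm1, hm2⟩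
    have hme : m ≤ e := le_trans hmprop.2.2 (min_le_left _ _)
    have hmb₂ : m ≤ b₂ := le_trans hmprop.2.2 (min_le_right _ _)
    have hmb : m ≤ b := le_trans hme he2
    -- on (-1, m], the derivative has a definite sign bounded below in size by |G|/(4(1+x))
    have hsign : ∀ x ∈ Ioc (-1:ℝ) m, x ∈ Ioo (-1:ℝ) x₀ →
        (0 < G → G/(4*(1+x)) ≤ U' x) ∧ (G < 0 → U' x ≤ G/(4*(1+x))) := by
      intro x hx hxm
      have hxb : x ∈ Ioc (-1:ℝ) b := ⟨hx.1, le_trans hx.2 hmb⟩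
      obtain ⟨h1, h2, h3, h4⟩ := hfacts x hxb
      have heqx := heq x (hJsub' hxb)
      have hprop := hx₀sub hxm
      have hbx := hband x ⟨hx.1, le_trans hx.2 hme⟩ (U x) hprop.1
      have hNeq : (1 - x^2) * U' x = H x - 2*x*(U x) - (U x)^2/2 := by linarith
      constructor
      · intro hG
        rw [abs_of_pos hG] at hbx
        have hN : G/2 ≤ (1 - x^2) * U' x := by
          rw [hNeq]
          have := (abs_le.mp hbx).1
          linarith
        have hU'pos : 0 < U' x := by
          by_contra hcon
          push_neg at hcon
          have hprod : (1-x^2) * U' x ≤ 0 := mul_nonpos_iff.mpr (Or.inl ⟨h3.le, hcon⟩)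
          linarith only [hprod, hN, hG]
        rw [div_le_iff₀ (by linarith : (0:ℝ) < 4*(1+x))]
        have h6 := mul_le_mul_of_nonneg_left h4 hU'pos.le
        nlinarith only [hN, h6]
      · intro hG
        rw [abs_of_neg hG] at hbx
        have hN : (1 - x^2) * U' x ≤ G/2 := by
          rw [hNeq]
          have := (abs_le.mp hbx).2
          linarith
        have hU'neg : U' x < 0 := by
          by_contra hcon
          push_neg at hcon
          have hprod : 0 ≤ (1-x^2) * U' x := mul_nonneg h3.le hcon
          linarith only [hprod, hN, hG]
        rw [le_div_iff₀ (by linarith : (0:ℝ) < 4*(1+x))]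
        have h6 := mul_le_mul_of_nonneg_left h4 (neg_nonneg.mpr hU'neg.le)
        nlinarith only [hN, h6]
    have hGne4 : G ≠ 0 := hne
    -- auxiliary continuity/derivative facts used in both sign cases
    have hlogcont : ∀ κ : ℝ, ∀ a, -1 < a → a ≤ m → ∀ x ∈ Icc a m,
        ContinuousWithinAt (fun y => κ * Real.log (1+y)) (Icc a m) x := by
      intro κ a ha ham x hx
      have h1 : (0:ℝ) < 1 + x := by
        have := hx.1
        linarith
      exact (((Real.continuousAt_log (ne_of_gt h1)).comp
        ((continuous_const.add continuous_id).continuousAt)).continuousWithinAt).const_mul κ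
    have hlogderiv : ∀ κ : ℝ, ∀ a, -1 < a → a ≤ m → ∀ x ∈ Ioo a m,
        HasDerivWithinAt (fun y => κ * Real.log (1+y)) (κ * (1/(1+x))) (Ioo a m) x := by
      intro κ a ha ham x hx
      have h1 : (0:ℝ) < 1 + x := by
        have := hx.1
        linarith
      have h2 : HasDerivAt (fun y : ℝ => 1 + y) 1 x := by
        simpa using (hasDerivAt_id x).const_add (1:ℝ)
      exact HasDerivWithinAt.const_mul κ (by simpa using (h2.log (ne_of_gt h1)).hasDerivWithinAt)
    have hUcont : ∀ a, -1 < a → a ≤ m → ∀ x ∈ Icc a m, ContinuousWithinAt U (Icc a m) x := by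
      intro a ha ham x hx
      have hxJ : x ∈ Ioc (-1:ℝ) b := ⟨lt_of_lt_of_le ha hx.1, le_trans hx.2 hmb⟩
      exact (hUc x (hJsub hxJ)).mono
        (fun w hw => hJsub ⟨lt_of_lt_of_le ha hw.1, le_trans hw.2 hmb⟩)
    have hUderiv : ∀ a, -1 < a → a ≤ m → ∀ x ∈ Ioo a m,
        HasDerivWithinAt U (U' x) (Ioo a m) x := by
      intro a ha ham x hx
      have hxJ : x ∈ Ioc (-1:ℝ) b := ⟨lt_of_lt_of_le ha hx.1.le, le_trans hx.2.le hmb⟩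
      exact (hU x (hJsub hxJ)).mono
        (fun w hw => hJsub ⟨lt_of_lt_of_le ha hw.1.le, le_trans hw.2.le hmb⟩)
    rcases Ne.lt_or_gt hne with hGneg | hGpos
    · -- G < 0 : -U + (G/4) log(1+x) is nondecreasing, so U → +∞, contradicting U < M
      obtain ⟨C, hCdef⟩ : ∃ C : ℝ, C = -U m + (G/4) * Real.log (1+m) := ⟨_, rfl⟩
      obtain ⟨t, htdef⟩ : ∃ t : ℝ, t = (4/G) * (M + C + 1) := ⟨_, rfl⟩
      set a := -1 + min (1+m) (Real.exp t) with hadef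
      have ha1 : (1:ℝ) + a = min (1+m) (Real.exp t) := by rw [hadef]; ring
      have ha1pos : 0 < 1 + a := by rw [ha1]; exact lt_min (by linarith) (Real.exp_pos t)
      have ha2 : a ≤ m := by
        have := min_le_left (1+m) (Real.exp t)
        rw [hadef]; linarith
      have ha0 : (-1:ℝ) < a := by linarith
      have halog : Real.log (1+a) ≤ t := by
        rw [ha1]
        calc Real.log (min (1+m) (Real.exp t)) ≤ Real.log (Real.exp t) :=
              Real.log_le_log (by rw [← ha1]; exact ha1pos) (min_le_right _ _)
        _ = t := Real.log_exp t
      have hcomp : -U a + (G/4) * Real.log (1+a) ≤ C := by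
        rw [hCdef]
        apply mono_le_aux (f := fun x => -U x + (G/4) * Real.log (1+x))
          (f' := fun x => -U' x + (G/4) * (1/(1+x))) ha2
        · intro x hx
          exact (hUcont a ha0 ha2 x hx).neg.add (hlogcont (G/4) a ha0 ha2 x hx)
        · intro x hx
          exact (hUderiv a ha0 ha2 x hx).neg.add (hlogderiv (G/4) a ha0 ha2 x hx)
        · intro x hx
          have hxIoc : x ∈ Ioc (-1:ℝ) m := ⟨lt_of_lt_of_le ha0 hx.1.le, hx.2.le⟩
          have hxIoo : x ∈ Ioo (-1:ℝ) x₀ := ⟨hxIoc.1, lt_of_le_of_lt hxIoc.2 hm2⟩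
          have hs := (hsign x hxIoc hxIoo).2 hGneg
          have h1 := (hfacts x ⟨hxIoc.1, le_trans hxIoc.2 hmb⟩).1
          have heq2 : G/(4*(1+x)) = (G/4) * (1/(1+x)) := by
            field_simp
          rw [heq2] at hs
          linarith
      -- contradiction with U a < M
      have hUa : U a < M := hup a ⟨ha0, le_trans ha2 hmb⟩
      have hGt : (G/4) * t = M + C + 1 := by
        rw [htdef]
        field_simp
      have h5 : (G/4) * t ≤ (G/4) * Real.log (1+a) :=
        mul_le_mul_of_nonpos_left halog (by linarith)
      rw [hGt] at h5
      linarith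
    · -- G > 0 : U - (G/4) log(1+x) is nondecreasing, so U → -∞, contradicting -M < U
      obtain ⟨C, hCdef⟩ : ∃ C : ℝ, C = U m - (G/4) * Real.log (1+m) := ⟨_, rfl⟩
      obtain ⟨t, htdef⟩ : ∃ t : ℝ, t = (4/G) * (-M - C - 1) := ⟨_, rfl⟩
      set a := -1 + min (1+m) (Real.exp t) with hadef
      have ha1 : (1:ℝ) + a = min (1+m) (Real.exp t) := by rw [hadef]; ring
      have ha1pos : 0 < 1 + a := by rw [ha1]; exact lt_min (by linarith) (Real.exp_pos t)
      have ha2 : a ≤ m := by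
        have := min_le_left (1+m) (Real.exp t)
        rw [hadef]; linarith
      have ha0 : (-1:ℝ) < a := by linarith
      have halog : Real.log (1+a) ≤ t := by
        rw [ha1]
        calc Real.log (min (1+m) (Real.exp t)) ≤ Real.log (Real.exp t) :=
              Real.log_le_log (by rw [← ha1]; exact ha1pos) (min_le_right _ _)
        _ = t := Real.log_exp t
      have hcomp : U a - (G/4) * Real.log (1+a) ≤ C := by
        rw [hCdef]
        apply mono_le_aux (f := fun x => U x - (G/4) * Real.log (1+x))
          (f' := fun x => U' x - (G/4) * (1/(1+x))) ha2
        · intro x hx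
          exact (hUcont a ha0 ha2 x hx).sub (hlogcont (G/4) a ha0 ha2 x hx)
        · intro x hx
          exact (hUderiv a ha0 ha2 x hx).sub (hlogderiv (G/4) a ha0 ha2 x hx)
        · intro x hx
          have hxIoc : x ∈ Ioc (-1:ℝ) m := ⟨lt_of_lt_of_le ha0 hx.1.le, hx.2.le⟩
          have hxIoo : x ∈ Ioo (-1:ℝ) x₀ := ⟨hxIoc.1, lt_of_le_of_lt hxIoc.2 hm2⟩
          have hs := (hsign x hxIoc hxIoo).1 hGpos
          have h1 := (hfacts x ⟨hxIoc.1, le_trans hxIoc.2 hmb⟩).1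
          have heq2 : G/(4*(1+x)) = (G/4) * (1/(1+x)) := by
            field_simp
          rw [heq2] at hs
          linarith
      have hUa : -M < U a := hdn a ⟨ha0, le_trans ha2 hmb₂⟩
      have hGt : (G/4) * t = -M - C - 1 := by
        rw [htdef]
        field_simp
      have h5 : (G/4) * Real.log (1+a) ≤ (G/4) * t :=
        mul_le_mul_of_nonneg_left halog (by linarith)
      rw [hGt] at h5
      linarith
  -- conclusion
  have hsq : (L₁ - 2)^2 = 4 + 2*H (-1) := by nlinarith [hG0]
  constructor
  · nlinarith [sq_nonneg (L₁ - 2)]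
  · refine ⟨L₁, htend, ?_⟩
    have hsqrt : Real.sqrt (4 + 2*H (-1)) = |L₁ - 2| := by
      rw [← hsq, Real.sqrt_sq_eq_abs]
    rcases le_or_gt 2 L₁ with h | h
    · right
      rw [hsqrt, abs_of_nonneg (by linarith)]
      ring
    · left
      rw [hsqrt, abs_of_neg (by linarith)]
      ring
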